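/- Let q, p ∈ ℂ with q ≠ 0 and p² = q, and let Q1, Q2, Q3 ∈ ℂ with 1 − Q1Q2 q^{i−1} ≠ 0 for every integer i ≥ 1. Suppose (b_k)_{k≥0} is a sequence of complex numbers satisfying, for every k ≥ 0 (with b_{−1} = b_{−2} = 0), the recursion q^k b_k − Q1(1+Q2Q3) p q^{k−1} b_{k−1} + Q1²Q2Q3 q^{k−1} b_{k−2} = b_k − (1+Q1Q3) p b_{k−1} + Q1Q3 q b_{k−2}. Define a_k := b_k · ∏_{i=1}^k (1 − Q1Q2 q^{i−1})^{-1}. Then the formal power series Ψ := ∑_{k≥0} a_k x^k ∈ ℂ[[x]] satisfies H Ψ = 0; equivalently, for every k ≥ 0 (with a_{−1} = a_{−2} = 0), (1 − Q1Q2 q^{k−2})(1 − Q1Q2 q^{k−1}) q^k a_k − Q1(1+Q2Q3) p (1 − Q1Q2 q^{k−2}) q^{k−1} a_{k−1} + Q1²Q2Q3 q^{k−1} a_{k−2} = (1 − Q1Q2 q^{k−2})(1 − Q1Q2 q^{k−1}) a_k − (1+Q1Q3) p (1 − Q1Q2 q^{k−2}) a_{k−1} + Q1Q3 q a_{k−2}.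 -/

import Mathlib

/-- The substitution operator `S : ℂ[[x]] → ℂ[[x]]`, `(Sf)(x) = f(qx)`, sending
the `k`-th coefficient `c_k` to `q^k c_k`. -/
noncomputable def Sop (q : ℂ) : Module.End ℂ (PowerSeries ℂ) where
  toFun f := PowerSeries.rescale q f
  map_add' f g := map_add _ f g
  map_smul' c f := by
    ext n
    simp [PowerSeries.coeff_rescale]
    ring

/-- Multiplication by `x` on `ℂ[[x]]`. -/
noncomputable def Mop : Module.End ℂ (PowerSeries ℂ) :=
  LinearMap.mulLeft ℂ (PowerSeries.X : PowerSeries ℂ)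

/-- The operator `H(x, q^{x∂x})` of Section 5.2 of the paper. -/
noncomputable def Hop (q p Q1 Q2 Q3 : ℂ) : Module.End ℂ (PowerSeries ℂ) :=
  (1 - (Q1 * Q2 * q ^ (-2 : ℤ)) • Sop q) * (1 - (Q1 * Q2 * q ^ (-1 : ℤ)) • Sop q)
  - ((1 + Q1 * Q3) * p) • (Mop * (1 - (Q1 * Q2 * q ^ (-1 : ℤ)) • Sop q))
  + (Q1 * Q3 * q) • (Mop * Mop)
  - (1 - (Q1 * Q2 * q ^ (-2 : ℤ)) • Sop q) * (1 - (Q1 * Q2 * q ^ (-1 : ℤ)) • Sop q) * Sop q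
  + (Q1 * (1 + Q2 * Q3) * p) • (Mop * (1 - (Q1 * Q2 * q ^ (-1 : ℤ)) • Sop q) * Sop q)
  - (Q1 ^ 2 * Q2 * Q3 * q) • (Mop * Mop * Sop q)

/-- Theorem 2 of the paper: if `(b_k)` satisfies the recursion
coming from the `q`-difference equation for `Φ`, and
`a_k = b_k ∏_{i=1}^k (1 − Q1Q2 q^{i−1})⁻¹`, then `Ψ = ∑ a_k x^k` satisfies
`HΨ = 0`; equivalently, the `a_k` satisfy the recursion (ak-recursion). -/
theorem closed_topological_vertex_Psi_qdifference
    (q p Q1 Q2 Q3 : ℂ) (hq : q ≠ 0) (hp : p ^ 2 = q)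
    (hQ : ∀ i : ℕ, 1 - Q1 * Q2 * q ^ (i : ℕ) ≠ 0)
    (b : ℤ → ℂ) (hbneg : ∀ m : ℤ, m < 0 → b m = 0)
    (hrec : ∀ k : ℤ, 0 ≤ k →
      q ^ k * b k - Q1 * (1 + Q2 * Q3) * p * q ^ (k - 1) * b (k - 1)
          + Q1 ^ 2 * Q2 * Q3 * q ^ (k - 1) * b (k - 2) =
        b k - (1 + Q1 * Q3) * p * b (k - 1) + Q1 * Q3 * q * b (k - 2))
    (a : ℤ → ℂ)
    (ha : ∀ m : ℤ, a m = b m * ∏ i ∈ Finset.range m.toNat, (1 - Q1 * Q2 * q ^ (i : ℕ))⁻¹) :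
    Hop q p Q1 Q2 Q3 (PowerSeries.mk (fun n : ℕ => a n)) = 0 ∧
    ∀ k : ℤ, 0 ≤ k →
      (1 - Q1 * Q2 * q ^ (k - 2)) * (1 - Q1 * Q2 * q ^ (k - 1)) * q ^ k * a k
          - Q1 * (1 + Q2 * Q3) * p * (1 - Q1 * Q2 * q ^ (k - 2)) * q ^ (k - 1) * a (k - 1)
          + Q1 ^ 2 * Q2 * Q3 * q ^ (k - 1) * a (k - 2) =
        (1 - Q1 * Q2 * q ^ (k - 2)) * (1 - Q1 * Q2 * q ^ (k - 1)) * a k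
          - (1 + Q1 * Q3) * p * (1 - Q1 * Q2 * q ^ (k - 2)) * a (k - 1)
          + Q1 * Q3 * q * a (k - 2) := by
  have haneg : ∀ m : ℤ, m < 0 → a m = 0 := fun m hm => by rw [ha, hbneg m hm, zero_mul]
  have hPne : ∀ m : ℕ, (∏ i ∈ Finset.range m, (1 - Q1 * Q2 * q ^ (i : ℕ))) ≠ 0 :=
    fun m => Finset.prod_ne_zero_iff.2 fun i _ => hQ i
  have hbval : ∀ m : ℕ, b m = a m * ∏ i ∈ Finset.range m, (1 - Q1 * Q2 * q ^ (i : ℕ)) := by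
    intro m
    rw [ha, Int.toNat_natCast, Finset.prod_inv_distrib, mul_assoc,
      inv_mul_cancel₀ (hPne m), mul_one]
  have hA : ∀ k : ℤ, 0 ≤ k →
      (1 - Q1 * Q2 * q ^ (k - 2)) * (1 - Q1 * Q2 * q ^ (k - 1)) * q ^ k * a k
          - Q1 * (1 + Q2 * Q3) * p * (1 - Q1 * Q2 * q ^ (k - 2)) * q ^ (k - 1) * a (k - 1)
          + Q1 ^ 2 * Q2 * Q3 * q ^ (k - 1) * a (k - 2) =
        (1 - Q1 * Q2 * q ^ (k - 2)) * (1 - Q1 * Q2 * q ^ (k - 1)) * a k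
          - (1 + Q1 * Q3) * p * (1 - Q1 * Q2 * q ^ (k - 2)) * a (k - 1)
          + Q1 * Q3 * q * a (k - 2) := by
    intro k hk
    obtain ⟨n, rfl⟩ := Int.eq_ofNat_of_zero_le hk
    match n with
    | 0 =>
      have h1 : a ((0:ℕ) - 1 : ℤ) = 0 := haneg _ (by norm_num)
      have h2 : a ((0:ℕ) - 2 : ℤ) = 0 := haneg _ (by norm_num)
      rw [h1, h2]
      norm_num
    | 1 =>
      have h1 : a ((1:ℕ) - 2 : ℤ) = 0 := haneg _ (by norm_num)
      have hb := hrec 1 (by norm_num)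
      have hbm1 : b (-1 : ℤ) = 0 := hbneg _ (by norm_num)
      rw [show (1:ℤ) - 1 = 0 by norm_num, show (1:ℤ) - 2 = -1 by norm_num, hbm1,
        zpow_one, zpow_zero, show (0:ℤ) = ((0:ℕ):ℤ) by norm_num,
        show (1:ℤ) = ((1:ℕ):ℤ) by norm_num, hbval 0, hbval 1] at hb
      simp only [Finset.prod_range_zero, Finset.prod_range_one, Finset.prod_range_succ,
        pow_zero, mul_one] at hb
      simp only [Nat.cast_one, Nat.cast_zero] at hb h1 ⊢
      rw [h1, show (1:ℤ) - 2 = -1 by norm_num, show (1:ℤ) - 1 = 0 by norm_num,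
        zpow_one, zpow_zero, show ((-1:ℤ)) = -(1:ℤ) by norm_num, zpow_neg, zpow_one]
      field_simp
      linear_combination (q - Q1 * Q2) * hb
    | (n+2) =>
      have w1 : ((n+2:ℕ):ℤ) - 1 = ((n+1:ℕ):ℤ) := by push_cast; ring
      have w2 : ((n+2:ℕ):ℤ) - 2 = ((n:ℕ):ℤ) := by push_cast; ring
      have hb := hrec ((n+2:ℕ):ℤ) (by positivity)
      rw [w1, w2, zpow_natCast, zpow_natCast, hbval (n+2), hbval (n+1), hbval n] at hb
      simp only [Finset.prod_range_succ] at hb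
      rw [w1, w2, zpow_natCast, zpow_natCast, zpow_natCast]
      apply mul_left_cancel₀ (hPne n)
      linear_combination hb
  refine ⟨?_, hA⟩
  have hSop : ∀ f : PowerSeries ℂ, Sop q f = PowerSeries.rescale q f := fun _ => rfl
  have hMop : ∀ f : PowerSeries ℂ, Mop f = PowerSeries.X * f := fun _ => rfl
  have ht : q * q⁻¹ = 1 := mul_inv_cancel₀ hq
  have z2 : q ^ (-2 : ℤ) = q⁻¹ * q⁻¹ := by
    rw [zpow_neg, show ((2:ℤ)) = ((2:ℕ):ℤ) from rfl, zpow_natCast, sq, mul_inv]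
  have z1 : q ^ (-1 : ℤ) = q⁻¹ := by
    rw [zpow_neg, zpow_one]
  ext n
  simp only [Hop, LinearMap.sub_apply, LinearMap.add_apply, LinearMap.smul_apply,
    Module.End.mul_apply, Module.End.one_apply, hSop, hMop, map_sub, map_add, map_smul,
    smul_eq_mul, PowerSeries.coeff_rescale, PowerSeries.coeff_mk, map_zero,
    PowerSeries.coeff_zero_eq_constantCoeff, z1, z2]
  match n with
  | 0 =>
    simp only [PowerSeries.coeff_zero_X_mul, pow_zero, one_mul, mul_zero, Nat.cast_zero]
    ring
  | 1 =>
    have h1 := hA 1 (by norm_num)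
    have hm1 : a (-1 : ℤ) = 0 := haneg _ (by norm_num)
    rw [show (1:ℤ) - 1 = 0 by norm_num, show (1:ℤ) - 2 = -1 by norm_num, hm1, zpow_one,
      zpow_zero, show ((-1:ℤ)) = -(1:ℤ) by norm_num, zpow_neg, zpow_one] at h1
    simp only [PowerSeries.coeff_succ_X_mul, PowerSeries.coeff_zero_X_mul, map_sub, map_smul,
      smul_eq_mul, PowerSeries.coeff_rescale, PowerSeries.coeff_mk, pow_one, pow_zero, one_mul,
      mul_zero, Nat.cast_zero, Nat.cast_one, mul_one]
    linear_combination (-1 : ℂ) * h1 +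
      (-(Q1*Q2*a 1) - q⁻¹*Q1*Q2*a 1 + q⁻¹*Q1^2*Q2^2*a 1 + q*Q1*Q2*a 1 + q*q⁻¹*Q1*Q2*a 1
        - q*q⁻¹*Q1^2*Q2^2*a 1 + q*q⁻¹*q⁻¹*Q1^2*Q2^2*a 1 - q^2*q⁻¹*q⁻¹*Q1^2*Q2^2*a 1) * ht
  | (n+2) =>
    have h2 := hA ((n+2:ℕ):ℤ) (by positivity)
    have w1 : ((n+2:ℕ):ℤ) - 1 = ((n+1:ℕ):ℤ) := by push_cast; ring
    have w2 : ((n+2:ℕ):ℤ) - 2 = ((n:ℕ):ℤ) := by push_cast; ring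
    rw [w1, w2, zpow_natCast, zpow_natCast, zpow_natCast] at h2
    simp only [PowerSeries.coeff_succ_X_mul, PowerSeries.coeff_zero_X_mul, map_sub, map_smul,
      smul_eq_mul, PowerSeries.coeff_rescale, PowerSeries.coeff_mk]
    linear_combination (-1 : ℂ) * h2 +
      (-(Q1*Q2*a ((n+2:ℕ):ℤ)*q^n) + p*Q1*Q2*a ((n+1:ℕ):ℤ)*q^n + p*Q1^2*Q2*Q3*a ((n+1:ℕ):ℤ)*q^n
        - q*Q1*Q2*a ((n+2:ℕ):ℤ)*q^n + q*Q1^2*Q2^2*a ((n+2:ℕ):ℤ)*q^n*q^n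
        - q*p*Q1^2*Q2*a ((n+1:ℕ):ℤ)*q^n*q^n - q*p*Q1^2*Q2^2*Q3*a ((n+1:ℕ):ℤ)*q^n*q^n
        - q*q⁻¹*Q1*Q2*a ((n+2:ℕ):ℤ)*q^n + q^2*Q1*Q2*a ((n+2:ℕ):ℤ)*q^n*q^n
        + q^2*q⁻¹*Q1^2*Q2^2*a ((n+2:ℕ):ℤ)*q^n*q^n + q^3*Q1*Q2*a ((n+2:ℕ):ℤ)*q^n*q^n
        - q^3*Q1^2*Q2^2*a ((n+2:ℕ):ℤ)*q^n*q^n*q^n + q^3*q⁻¹*Q1*Q2*a ((n+2:ℕ):ℤ)*q^n*q^n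
        + q^3*q⁻¹*q⁻¹*Q1^2*Q2^2*a ((n+2:ℕ):ℤ)*q^n*q^n
        - q^4*q⁻¹*Q1^2*Q2^2*a ((n+2:ℕ):ℤ)*q^n*q^n*q^n
        - q^5*q⁻¹*q⁻¹*Q1^2*Q2^2*a ((n+2:ℕ):ℤ)*q^n*q^n*q^n) * ht
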